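/- arXiv:2002.03250 — 2 statements merged into one kernel-verified Lean document; each statement's English description precedes it below -/
import Mathlib

section
/- For every natural number k ≥ 2, ∫_0^1 ln(1 − x²) · (ln x)^{k−1} / x dx = (−1)^k · (k−1)!/2^k · ζ(k+1). -/
open MeasureTheory Real

lemma image_exp_neg_Ioi : (fun t : ℝ => Real.exp (-t)) '' Set.Ioi 0 = Set.Ioo (0:ℝ) 1 := by
  ext y
  constructor
  · rintro ⟨t, ht, rfl⟩
    refine ⟨Real.exp_pos _, ?_⟩
    rw [← Real.exp_zero]
    exact Real.exp_lt_exp.2 (by simpa using (Set.mem_Ioi.mp ht))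
  · rintro ⟨hy0, hy1⟩
    exact ⟨-Real.log y, by simpa using Real.log_neg hy0 hy1, by simp [Real.exp_log hy0]⟩

lemma hasDerivWithinAt_exp_neg (t : ℝ) :
    HasDerivWithinAt (fun t : ℝ => Real.exp (-t)) (Real.exp (-t) * (-1)) (Set.Ioi 0) t :=
  ((Real.hasDerivAt_exp (-t)).comp t (hasDerivAt_neg t)).hasDerivWithinAt

lemma injOn_exp_neg : Set.InjOn (fun t : ℝ => Real.exp (-t)) (Set.Ioi 0) := by
  intro a _ b _ hab
  have := Real.exp_injective hab
  linarith [neg_injective this]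

lemma setIntegral_Ioo_exp_neg (g : ℝ → ℝ) :
    ∫ x in Set.Ioo (0:ℝ) 1, g x
      = ∫ t in Set.Ioi (0:ℝ), Real.exp (-t) * g (Real.exp (-t)) := by
  rw [← image_exp_neg_Ioi,
    integral_image_eq_integral_abs_deriv_smul measurableSet_Ioi
      (fun t _ => hasDerivWithinAt_exp_neg t) injOn_exp_neg g]
  congr 1
  funext t
  rw [smul_eq_mul, abs_mul, abs_neg, abs_one, mul_one, abs_of_pos (Real.exp_pos _)]

lemma integrableOn_pow_mul_log_pow (p m : ℕ) :
    IntegrableOn (fun x : ℝ => x ^ p * Real.log x ^ m) (Set.Ioo (0:ℝ) 1) := by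
  rw [← image_exp_neg_Ioi,
    integrableOn_image_iff_integrableOn_abs_deriv_smul measurableSet_Ioi
      (fun t _ => hasDerivWithinAt_exp_neg t) injOn_exp_neg]
  have heq : (fun t : ℝ => |Real.exp (-t) * (-1)| •
      ((Real.exp (-t)) ^ p * Real.log (Real.exp (-t)) ^ m))
      = fun t : ℝ => ((-1:ℝ)^m) * (t ^ ((m:ℝ)) * Real.exp (-((p:ℝ)+1) * t ^ (1:ℝ))) := by
    funext t
    rw [smul_eq_mul, abs_mul, abs_neg, abs_one, mul_one, abs_of_pos (Real.exp_pos _),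
      Real.log_exp, Real.rpow_natCast, Real.rpow_one, neg_pow]
    rw [show Real.exp (-t) * (Real.exp (-t) ^ p * ((-1:ℝ)^m * t ^ m))
        = ((-1:ℝ)^m) * (t^m * (Real.exp (-t) * Real.exp (-t) ^ p)) by ring,
      ← Real.exp_nat_mul, ← Real.exp_add]
    congr 2
    ring
  rw [heq]
  exact (integrableOn_rpow_mul_exp_neg_mul_rpow
    (by exact_mod_cast neg_one_lt_zero.trans_le (Nat.cast_nonneg m)) one_pos
    (by positivity)).const_mul _

lemma integral_Ioo_pow_mul_log_pow (p m : ℕ) :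
    ∫ x in Set.Ioo (0:ℝ) 1, x ^ p * Real.log x ^ m
      = (-1:ℝ)^m * m.factorial / ((p:ℝ)+1)^(m+1) := by
  rw [setIntegral_Ioo_exp_neg]
  have heq : ∀ t ∈ Set.Ioi (0:ℝ),
      Real.exp (-t) * ((Real.exp (-t)) ^ p * Real.log (Real.exp (-t)) ^ m)
      = ((-1:ℝ)^m) * (t ^ (((m:ℝ)+1)-1) * Real.exp (-(((p:ℝ)+1) * t))) := by
    intro t _
    rw [Real.log_exp, neg_pow, show ((m:ℝ)+1)-1 = ((m:ℕ):ℝ) by push_cast; ring,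
      Real.rpow_natCast]
    rw [show Real.exp (-t) * (Real.exp (-t) ^ p * ((-1:ℝ)^m * t ^ m))
        = ((-1:ℝ)^m) * (t^m * (Real.exp (-t) * Real.exp (-t) ^ p)) by ring,
      ← Real.exp_nat_mul, ← Real.exp_add]
    congr 3
    ring
  rw [setIntegral_congr_fun measurableSet_Ioi heq, MeasureTheory.integral_const_mul _ _,
    integral_rpow_mul_exp_neg_mul_Ioi (by positivity) (by positivity)]
  rw [show ((m:ℝ)+1) = ((m+1 : ℕ):ℝ) by push_cast; ring, Real.rpow_natCast,
    show (((m+1:ℕ):ℝ)) = (m:ℝ)+1 by push_cast; ring, Real.Gamma_nat_eq_factorial]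
  rw [one_div, inv_pow]
  field_simp

theorem integral_log_one_sub_sq_mul_pow_log (k : ℕ) (hk : 2 ≤ k) :
    ∫ x in Set.Ioo (0 : ℝ) 1, Real.log (1 - x ^ 2) * (Real.log x) ^ (k - 1) / x
      = (-1 : ℝ) ^ k * ((k - 1).factorial : ℝ) / 2 ^ k *
        ∑' n : ℕ, (1 : ℝ) / (n + 1) ^ (k + 1) := by
  have hm : k - 1 + 1 = k := by omega
  have hsign : ((-1:ℝ))^k = (-1)^(k-1) * (-1) := by rw [← pow_succ, hm]
  set F : ℕ → ℝ → ℝ :=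
    fun n x => -(1/((n:ℝ)+1)) * (x ^ (2*n+1) * Real.log x ^ (k-1)) with hF
  have hint : ∀ n, IntegrableOn (F n) (Set.Ioo (0:ℝ) 1) :=
    fun n => (integrableOn_pow_mul_log_pow (2*n+1) (k-1)).const_mul _
  have hval : ∀ n : ℕ, ∫ x in Set.Ioo (0:ℝ) 1, F n x
      = (-1:ℝ)^k * ((k-1).factorial : ℝ) / 2^k * ((1:ℝ)/((n:ℝ)+1)^(k+1)) := by
    intro n
    rw [hF]
    rw [MeasureTheory.integral_const_mul _ _, integral_Ioo_pow_mul_log_pow, hm]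
    rw [show (((2*n+1 : ℕ):ℝ)+1) = 2 * ((n:ℝ)+1) by push_cast; ring, mul_pow, hsign]
    have h1 : ((n:ℝ)+1) ≠ 0 := by positivity
    have h2 : (2:ℝ)^k ≠ 0 := by positivity
    field_simp
    ring
  -- pointwise sum
  have hsum : ∀ x ∈ Set.Ioo (0:ℝ) 1,
      HasSum (fun n => F n x)
        (Real.log (1 - x ^ 2) * (Real.log x) ^ (k - 1) / x) := by
    intro x hx
    have hx0 : (0:ℝ) < x := hx.1
    have habs : |x^2| < 1 := by
      rw [abs_of_nonneg (by positivity)]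
      nlinarith [hx.1, hx.2]
    have h2 := (Real.hasSum_pow_div_log_of_abs_lt_one habs).mul_right
      (-(Real.log x ^ (k-1) / x))
    have hfun : (fun n : ℕ => (x^2) ^ (n+1) / ((n:ℝ)+1) * (-(Real.log x ^ (k-1) / x)))
        = fun n => F n x := by
      funext n
      have hxp : (x^2)^(n+1) = x^(2*n+1) * x := by
        rw [← pow_mul, show 2*(n+1) = (2*n+1)+1 by ring, pow_succ]
      rw [hF, hxp]
      field_simp
    rw [hfun, show -Real.log (1 - x^2) * (-(Real.log x ^ (k-1) / x))
        = Real.log (1 - x^2) * Real.log x ^ (k-1) / x by ring] at h2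
    exact h2
  -- norms
  have hnorm : ∀ n : ℕ, ∫ x in Set.Ioo (0:ℝ) 1, ‖F n x‖
      = (-1:ℝ)^k * ∫ x in Set.Ioo (0:ℝ) 1, F n x := by
    intro n
    rw [← MeasureTheory.integral_const_mul _ _]
    refine setIntegral_congr_fun measurableSet_Ioo (fun x hx => ?_)
    have hlx : Real.log x < 0 := Real.log_neg hx.1 hx.2
    have hgx : F n x = (-1:ℝ)^k * ((1/((n:ℝ)+1)) * x^(2*n+1) * (-Real.log x)^(k-1)) := by
      rw [hF, neg_pow, hsign]
      ring_nf
      rw [show (k-1)*2 = 2*(k-1) by ring, pow_mul]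
      norm_num
    have hg0 : 0 ≤ (1/((n:ℝ)+1)) * x^(2*n+1) * (-Real.log x)^(k-1) :=
      mul_nonneg (mul_nonneg (by positivity) (pow_nonneg hx.1.le _))
        (pow_nonneg (by linarith) _)
    rw [hgx, Real.norm_eq_abs, abs_mul, abs_pow, abs_neg, abs_one, one_pow, one_mul,
      abs_of_nonneg hg0, ← mul_assoc, ← pow_add, Even.neg_one_pow ⟨k, rfl⟩, one_mul]
  have hsummable : Summable fun n : ℕ => (1:ℝ)/((n:ℝ)+1)^(k+1) := by
    have h := Real.summable_one_div_nat_pow.mpr (show 2 ≤ k+1 by omega)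
    have h2 := (summable_nat_add_iff 1).mpr h
    refine h2.congr fun n => ?_
    push_cast
    ring_nf
  have hnormsum : Summable fun n : ℕ => ∫ x in Set.Ioo (0:ℝ) 1, ‖F n x‖ := by
    refine Summable.congr ?_ fun n => (hnorm n).symm
    refine Summable.congr ?_ fun n => (congrArg (((-1:ℝ)^k) * ·) (hval n)).symm
    simpa using ((hsummable.mul_left _).mul_left _)
  calc ∫ x in Set.Ioo (0:ℝ) 1, Real.log (1 - x ^ 2) * (Real.log x) ^ (k - 1) / x
      = ∫ x in Set.Ioo (0:ℝ) 1, ∑' n, F n x :=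
        setIntegral_congr_fun measurableSet_Ioo
          (fun x hx => ((hsum x hx).tsum_eq).symm)
    _ = ∑' n, ∫ x in Set.Ioo (0:ℝ) 1, F n x :=
        (integral_tsum_of_summable_integral_norm hint hnormsum).symm
    _ = ∑' n : ℕ, (-1:ℝ)^k * ((k-1).factorial : ℝ) / 2^k * ((1:ℝ)/((n:ℝ)+1)^(k+1)) :=
        tsum_congr hval
    _ = (-1 : ℝ) ^ k * ((k - 1).factorial : ℝ) / 2 ^ k *
        ∑' n : ℕ, (1 : ℝ) / (n + 1) ^ (k + 1) := tsum_mul_left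
end

section
/- For every real c > 1, ∫_0^1 Li_c(x)/x · ln(ln(1/x)) dx = −γ ζ(c+1) + ζ'(c+1). -/
set_option maxHeartbeats 1000000

open MeasureTheory Real

open Set Filter in
private lemma gammaInt :
    ∫ t in Ioi (0:ℝ), Real.log t * Real.exp (-t) = -Real.eulerMascheroniConstant := by
  have h1 : HasDerivAt Complex.GammaIntegral
      (∫ t : ℝ in Ioi 0, (t:ℂ) ^ ((1:ℂ) - 1) * (Real.log t * Real.exp (-t))) 1 :=
    Complex.hasDerivAt_GammaIntegral (by simp)
  have heq : Complex.Gamma =ᶠ[nhds (1:ℂ)] Complex.GammaIntegral := by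
    filter_upwards [(isOpen_lt continuous_const Complex.continuous_re).mem_nhds
      (by simp : (0:ℝ) < (1:ℂ).re)] with z hz
    exact Complex.Gamma_eq_integral hz
  have h2 : HasDerivAt Complex.Gamma
      (∫ t : ℝ in Ioi 0, (t:ℂ) ^ ((1:ℂ) - 1) * (Real.log t * Real.exp (-t))) 1 :=
    h1.congr_of_eventuallyEq heq
  have h3 := h2.unique Complex.hasDerivAt_Gamma_one
  have h4 : ∫ t : ℝ in Ioi 0, (t:ℂ) ^ ((1:ℂ) - 1) * (Real.log t * Real.exp (-t))
      = ((∫ t in Ioi (0:ℝ), Real.log t * Real.exp (-t) : ℝ) : ℂ) := by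
    have : ∀ t ∈ Ioi (0:ℝ), (t:ℂ) ^ ((1:ℂ) - 1) * (Real.log t * Real.exp (-t))
        = ((Real.log t * Real.exp (-t) : ℝ) : ℂ) := by
      intro t _
      push_cast
      rw [sub_self, Complex.cpow_zero, one_mul]
    rw [setIntegral_congr_fun measurableSet_Ioi this]
    exact integral_ofReal
  rw [h4] at h3
  exact_mod_cast h3

open Set Filter in
private lemma intOn_log_exp_Ioi1 :
    IntegrableOn (fun t => Real.log t * Real.exp (-t)) (Ioi (1:ℝ)) := by
  refine integrable_of_isBigO_exp_neg (one_half_pos) ?_ ?_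
  · refine ContinuousOn.mul (Real.continuousOn_log.mono ?_)
      (Real.continuous_exp.comp continuous_neg).continuousOn
    intro x hx
    simp only [mem_compl_iff, mem_singleton_iff]
    rintro rfl
    norm_num [mem_Ici] at hx
  · have hten : Tendsto (fun x : ℝ => x * Real.exp (-(1/2 * x))) atTop (nhds 0) := by
      have h2 : Tendsto (fun x : ℝ => 1/2 * x) atTop atTop :=
        Tendsto.const_mul_atTop (by norm_num) tendsto_id
      have h0 := (tendsto_pow_mul_exp_neg_atTop_nhds_zero 1).comp h2
      have := h0.const_mul (2:ℝ)
      simp only [Function.comp, pow_one, mul_zero] at this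
      convert this using 2 with x
      ring_nf
    rw [Asymptotics.isBigO_iff]
    refine ⟨1, ?_⟩
    filter_upwards [eventually_ge_atTop (1:ℝ),
      (hten.eventually (eventually_le_nhds (by norm_num : (0:ℝ) < 1)))] with x hx1 hx2
    have hlx : Real.log x ≤ x := (Real.log_le_sub_one_of_pos (by linarith)).trans (by linarith)
    have h0 : (0:ℝ) ≤ Real.log x := Real.log_nonneg hx1
    rw [Real.norm_eq_abs, Real.norm_eq_abs, abs_of_nonneg (by positivity),
      abs_of_nonneg (Real.exp_pos _).le, one_mul]
    have h1 : Real.log x * Real.exp (-x) ≤ x * Real.exp (-x) :=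
      mul_le_mul_of_nonneg_right hlx (Real.exp_pos _).le
    refine h1.trans ?_
    have hx' : x * Real.exp (-x) = (x * Real.exp (-(1/2*x))) * Real.exp (-(1/2) * x) := by
      rw [mul_assoc, ← Real.exp_add]; ring_nf
    rw [hx']
    nlinarith [Real.exp_pos (-(1/2) * x),
      mul_le_mul_of_nonneg_right hx2 (Real.exp_pos (-(1/2)*x)).le]

open Set Filter in
private lemma intOn_log_exp :
    IntegrableOn (fun t => Real.log t * Real.exp (-t)) (Ioi (0:ℝ)) := by
  rw [show Ioi (0:ℝ) = Ioc (0:ℝ) 1 ∪ Ioi 1 from (Ioc_union_Ioi_eq_Ioi zero_le_one).symm]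
  refine IntegrableOn.union ?_ intOn_log_exp_Ioi1
  have hneg : IntegrableOn (fun x => -Real.log x) (Ioc (0:ℝ) 1) := by
    refine intervalIntegral.integrableOn_deriv_of_nonneg
      (g := fun x => x - x * Real.log x) ?_ ?_ ?_
    · exact (continuous_id.sub Real.continuous_mul_log).continuousOn
    · intro x hx
      have h1 : HasDerivAt (fun x : ℝ => x * Real.log x) (Real.log x + 1) x :=
        Real.hasDerivAt_mul_log (ne_of_gt hx.1)
      exact ((hasDerivAt_id x).sub h1).congr_deriv (by simp)
    · intro x hx
      simpa using Real.log_nonpos hx.1.le hx.2.le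
  have hlog : IntegrableOn Real.log (Ioc (0:ℝ) 1) := by
    have := hneg.neg
    refine this.congr ?_
    filter_upwards with x
    simp
  refine Integrable.mono hlog ?_ ?_
  · refine (Measurable.aestronglyMeasurable ?_).restrict
    exact Real.measurable_log.mul (Real.measurable_exp.comp measurable_neg)
  · filter_upwards [ae_restrict_mem measurableSet_Ioc] with x hx
    rw [Real.norm_eq_abs, Real.norm_eq_abs, abs_mul]
    have : |Real.exp (-x)| ≤ 1 := by
      rw [abs_of_nonneg (Real.exp_pos _).le]
      exact Real.exp_le_one_iff.mpr (by linarith [hx.1])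
    nlinarith [abs_nonneg (Real.log x)]

open Set Filter in
private lemma intOn_exp_neg : IntegrableOn (fun t : ℝ => Real.exp (-t)) (Ioi (0:ℝ)) := by
  have := exp_neg_integrableOn_Ioi (0:ℝ) (one_pos)
  simpa using this

open Set Filter in
private lemma scaled_int {a : ℝ} (ha : 0 < a) :
    ∫ t in Ioi (0:ℝ), Real.log t * Real.exp (-(a * t))
      = (-Real.eulerMascheroniConstant - Real.log a) / a := by
  have key := integral_comp_mul_left_Ioi (fun u => Real.log (u / a) * Real.exp (-u)) 0 ha
  rw [mul_zero] at key
  have h1 : ∀ x ∈ Ioi (0:ℝ), Real.log (a * x / a) * Real.exp (-(a * x))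
      = Real.log x * Real.exp (-(a * x)) := by
    intro x _
    rw [mul_div_cancel_left₀ _ ha.ne']
  rw [setIntegral_congr_fun measurableSet_Ioi h1] at key
  rw [key]
  have h2 : ∀ u ∈ Ioi (0:ℝ), Real.log (u / a) * Real.exp (-u)
      = Real.log u * Real.exp (-u) - Real.log a * Real.exp (-u) := by
    intro u hu
    rw [Real.log_div (ne_of_gt hu) ha.ne']
    ring
  rw [setIntegral_congr_fun measurableSet_Ioi h2,
    integral_sub intOn_log_exp (intOn_exp_neg.const_mul _),
    MeasureTheory.integral_const_mul, gammaInt, integral_exp_neg_Ioi_zero, smul_eq_mul]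
  field_simp

open Set Filter in
private lemma himage : (fun t : ℝ => Real.exp (-t)) '' Ioi 0 = Ioo (0:ℝ) 1 := by
  ext y
  constructor
  · rintro ⟨t, ht, rfl⟩
    exact ⟨Real.exp_pos _, Real.exp_lt_one_iff.mpr (neg_neg_iff_pos.mpr ht)⟩
  · rintro ⟨h0, h1⟩
    exact ⟨-Real.log y, by simpa using Real.log_neg h0 h1, by simp [Real.exp_log h0]⟩

open Set Filter in
private lemma hderivW : ∀ x ∈ Ioi (0:ℝ), HasDerivWithinAt (fun t : ℝ => Real.exp (-t))
    (-Real.exp (-x)) (Ioi 0) x := by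
  intro x _
  exact ((Real.hasDerivAt_exp (-x)).comp x (hasDerivAt_neg x)).hasDerivWithinAt.congr_deriv
    (by ring)

open Set Filter in
private lemma hinj : Set.InjOn (fun t : ℝ => Real.exp (-t)) (Ioi 0) :=
  fun a _ b _ h => by
    have := Real.exp_injective h
    linarith [neg_injective this]

open Set Filter in
private lemma subst_integral (g : ℝ → ℝ) :
    ∫ x in Ioo (0:ℝ) 1, g x = ∫ t in Ioi (0:ℝ), Real.exp (-t) * g (Real.exp (-t)) := by
  have := integral_image_eq_integral_abs_deriv_smul measurableSet_Ioi hderivW hinj g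
  rw [himage] at this
  rw [this]
  refine setIntegral_congr_fun measurableSet_Ioi fun t _ => ?_
  rw [abs_neg, abs_of_pos (Real.exp_pos _), smul_eq_mul]

open Set Filter in
private lemma subst_integrable (g : ℝ → ℝ) :
    IntegrableOn g (Ioo (0:ℝ) 1) ↔
      IntegrableOn (fun t => Real.exp (-t) * g (Real.exp (-t))) (Ioi (0:ℝ)) := by
  have := integrableOn_image_iff_integrableOn_abs_deriv_smul measurableSet_Ioi hderivW hinj g
  rw [himage] at this
  rw [this]
  constructor <;> intro h <;> refine h.congr_fun (fun t ht => ?_) measurableSet_Ioi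
  · beta_reduce; rw [abs_neg, abs_of_pos (Real.exp_pos _), smul_eq_mul]
  · beta_reduce; rw [abs_neg, abs_of_pos (Real.exp_pos _), smul_eq_mul]

open Set Filter in
private lemma loglog_exp {t : ℝ} (ht : 0 < t) :
    Real.log (Real.log (1 / Real.exp (-t))) = Real.log t := by
  rw [one_div, ← Real.exp_neg, neg_neg, Real.log_exp]

open Set Filter in
private lemma loglog_integrable :
    IntegrableOn (fun x => Real.log (Real.log (1 / x))) (Ioo (0:ℝ) 1) := by
  rw [subst_integrable]
  refine (intOn_log_exp.congr_fun (fun t ht => ?_) measurableSet_Ioi)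
  rw [loglog_exp ht, mul_comm]

open Set Filter in
private lemma termInt (k : ℕ) :
    ∫ x in Ioo (0:ℝ) 1, x ^ k * Real.log (Real.log (1 / x))
      = (-Real.eulerMascheroniConstant - Real.log ((k:ℝ)+1)) / ((k:ℝ)+1) := by
  have hk : (0:ℝ) < (k:ℝ) + 1 := by positivity
  rw [subst_integral (fun x => x ^ k * Real.log (Real.log (1 / x)))]
  rw [show ∫ t in Ioi (0:ℝ),
        Real.exp (-t) * (Real.exp (-t) ^ k * Real.log (Real.log (1 / Real.exp (-t))))
      = ∫ t in Ioi (0:ℝ), Real.log t * Real.exp (-(((k:ℝ)+1) * t)) from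
    setIntegral_congr_fun measurableSet_Ioi fun t ht => by
      rw [loglog_exp ht, ← Real.exp_nat_mul, ← mul_assoc, ← Real.exp_add]
      rw [mul_comm]
      congr 2
      push_cast
      ring]
  exact scaled_int hk

/-- The Riemann zeta function as a real function, `ζ(s) = ∑_{n ≥ 1} n^{-s}`. -/
noncomputable def zetaR (s : ℝ) : ℝ := ∑' n : ℕ, ((n : ℝ) + 1) ^ (-s)

private lemma summable1 {s : ℝ} (hs : 1 < s) : Summable (fun n : ℕ => ((n:ℝ)+1) ^ (-s)) := by
  have h := Real.summable_nat_rpow_inv.mpr hs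
  have h2 := (summable_nat_add_iff 1).mpr h
  refine h2.congr fun n => ?_
  rw [Real.rpow_neg (by positivity)]
  push_cast
  rw [add_comm]

private lemma summable2 {s : ℝ} (hs : 1 < s) :
    Summable (fun n : ℕ => Real.log ((n:ℝ)+1) * ((n:ℝ)+1) ^ (-s)) := by
  set ε := (s - 1)/2 with hε
  have hε0 : 0 < ε := by simp [hε]; linarith
  have hs' : 1 < s - ε := by simp [hε]; linarith
  refine Summable.of_nonneg_of_le (fun n => ?_) (fun n => ?_)
    ((summable1 hs').mul_left (1/ε))
  · have : (0:ℝ) ≤ Real.log ((n:ℝ)+1) :=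
      Real.log_nonneg (by linarith [n.cast_nonneg (α := ℝ)])
    positivity
  · have hb : (0:ℝ) < (n:ℝ)+1 := by positivity
    have h1 : Real.log ((n:ℝ)+1) ≤ ((n:ℝ)+1) ^ ε / ε := Real.log_le_rpow_div hb.le hε0
    have h2 : ((n:ℝ)+1) ^ ε / ε * ((n:ℝ)+1) ^ (-s) = 1/ε * ((n:ℝ)+1) ^ (-(s-ε)) := by
      rw [div_mul_eq_mul_div, ← Real.rpow_add hb]
      ring_nf
    calc Real.log ((n:ℝ)+1) * ((n:ℝ)+1) ^ (-s)
        ≤ ((n:ℝ)+1) ^ ε / ε * ((n:ℝ)+1) ^ (-s) :=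
          mul_le_mul_of_nonneg_right h1 (Real.rpow_nonneg hb.le _)
      _ = 1/ε * ((n:ℝ)+1) ^ (-(s-ε)) := h2

open Set Filter in
private lemma hasDerivAt_zetaR {s : ℝ} (hs : 1 < s) :
    HasDerivAt zetaR (-∑' n : ℕ, Real.log ((n:ℝ)+1) * ((n:ℝ)+1) ^ (-s)) s := by
  set s₀ := (1 + s)/2 with hs₀
  have hs₀1 : 1 < s₀ := by simp [hs₀]; linarith
  have hss : s₀ < s := by simp [hs₀]; linarith
  have key : HasDerivAt (fun z => ∑' n : ℕ, ((n:ℝ)+1) ^ (-z))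
      (∑' n : ℕ, -(Real.log ((n:ℝ)+1) * ((n:ℝ)+1) ^ (-s))) s := by
    refine hasDerivAt_tsum_of_isPreconnected (𝕜 := ℝ) (F := ℝ) (α := ℕ)
      (u := fun n => Real.log ((n:ℝ)+1) * ((n:ℝ)+1) ^ (-s₀))
      (g := fun n z => ((n:ℝ)+1) ^ (-z))
      (g' := fun n y => -(Real.log ((n:ℝ)+1) * ((n:ℝ)+1) ^ (-y)))
      (summable2 hs₀1) isOpen_Ioi
      (isPreconnected_Ioi) (fun n y hy => ?_) (fun n y hy => ?_)
      (show s ∈ Ioi s₀ from hss) (summable1 hs) (show s ∈ Ioi s₀ from hss)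
    · have hb : (0:ℝ) < (n:ℝ)+1 := by positivity
      have h := (Real.hasStrictDerivAt_const_rpow hb (-y)).hasDerivAt
      have h2 := h.comp y (hasDerivAt_neg y)
      refine h2.congr_deriv ?_
      ring
    · have hb : (1:ℝ) ≤ (n:ℝ)+1 := by linarith [n.cast_nonneg (α := ℝ)]
      have hl : (0:ℝ) ≤ Real.log ((n:ℝ)+1) := Real.log_nonneg hb
      rw [norm_neg, Real.norm_eq_abs, abs_of_nonneg (by positivity)]
      refine mul_le_mul_of_nonneg_left ?_ hl
      exact Real.rpow_le_rpow_of_exponent_le hb (by linarith [hy.out])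
  rw [tsum_neg] at key
  exact key

private lemma deriv_zetaR {s : ℝ} (hs : 1 < s) :
    deriv zetaR s = -∑' n : ℕ, Real.log ((n:ℝ)+1) * ((n:ℝ)+1) ^ (-s) :=
  (hasDerivAt_zetaR hs).deriv

/-- The polylogarithm `Li_c(x) = ∑_{k ≥ 1} x^k / k^c` of real order `c`. -/
noncomputable def polylogR (c : ℝ) (x : ℝ) : ℝ :=
  ∑' k : ℕ, x ^ (k + 1) / ((k : ℝ) + 1) ^ c

theorem integral_polylog_div_mul_loglog (c : ℝ) (hc : 1 < c) :
    ∫ x in Set.Ioo (0 : ℝ) 1, polylogR c x / x * Real.log (Real.log (1 / x))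
      = -Real.eulerMascheroniConstant * zetaR (c + 1) + deriv zetaR (c + 1) := by
  set γ := Real.eulerMascheroniConstant
  set L : ℝ → ℝ := fun x => Real.log (Real.log (1 / x)) with hL
  have hc1 : 1 < c + 1 := by linarith
  -- Step 1: rewrite integrand as a tsum
  have step1 : ∀ x ∈ Set.Ioo (0:ℝ) 1, polylogR c x / x * L x
      = ∑' k : ℕ, x ^ k / ((k:ℝ)+1) ^ c * L x := by
    intro x hx
    have hx0 : x ≠ 0 := ne_of_gt hx.1
    rw [polylogR, ← tsum_div_const, ← tsum_mul_right]
    refine tsum_congr fun k => ?_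
    rw [pow_succ]
    field_simp
  rw [setIntegral_congr_fun measurableSet_Ioo step1]
  -- Step 2: swap integral and sum
  have hLmeas : Measurable L := by
    exact Real.measurable_log.comp (Real.measurable_log.comp (measurable_const.div measurable_id))
  have hmeas : ∀ k : ℕ, AEStronglyMeasurable
      (fun x : ℝ => x ^ k / ((k:ℝ)+1) ^ c * L x)
      (volume.restrict (Set.Ioo (0:ℝ) 1)) := by
    intro k
    exact (((measurable_id.pow_const k).div_const _).mul hLmeas).aestronglyMeasurable.restrict
  have hLfin : ∫⁻ x in Set.Ioo (0:ℝ) 1, ‖L x‖₊ ∂volume < ⊤ := loglog_integrable.2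
  have hbound : ∀ k : ℕ, ∫⁻ x in Set.Ioo (0:ℝ) 1, ‖x ^ k / ((k:ℝ)+1) ^ c * L x‖₊ ∂volume
      ≤ (‖((k:ℝ)+1) ^ (-c)‖₊ : ENNReal) * ∫⁻ x in Set.Ioo (0:ℝ) 1, ‖L x‖₊ ∂volume := by
    intro k
    rw [← lintegral_const_mul' _ _ ENNReal.coe_ne_top]
    refine setLIntegral_mono' measurableSet_Ioo fun x hx => ?_
    rw [← ENNReal.coe_mul, ENNReal.coe_le_coe, ← nnnorm_mul]
    rw [← NNReal.coe_le_coe, coe_nnnorm, coe_nnnorm, Real.norm_eq_abs, Real.norm_eq_abs,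
      abs_mul, abs_mul]
    refine mul_le_mul_of_nonneg_right ?_ (abs_nonneg _)
    have hb : (0:ℝ) < ((k:ℝ)+1) ^ c := Real.rpow_pos_of_pos (by positivity) _
    rw [abs_div, abs_of_pos hb, abs_of_pos (Real.rpow_pos_of_pos (by positivity) (-c)),
      Real.rpow_neg (by positivity), abs_pow]
    rw [div_le_iff₀ hb, inv_mul_cancel₀ hb.ne']
    exact pow_le_one₀ (abs_nonneg _) (by rw [abs_of_pos hx.1]; exact hx.2.le)
  have hswap : ∫ x in Set.Ioo (0:ℝ) 1, ∑' k : ℕ, x ^ k / ((k:ℝ)+1) ^ c * L x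
      = ∑' k : ℕ, ∫ x in Set.Ioo (0:ℝ) 1, x ^ k / ((k:ℝ)+1) ^ c * L x := by
    refine integral_tsum hmeas ?_
    refine ne_top_of_le_ne_top ?_ (ENNReal.tsum_le_tsum hbound)
    rw [ENNReal.tsum_mul_right]
    refine ENNReal.mul_ne_top ?_ hLfin.ne
    rw [ENNReal.tsum_coe_ne_top_iff_summable]
    have : Summable (fun k : ℕ => ((k:ℝ)+1) ^ (-c)) := summable1 hc
    have h2 : Summable (fun k : ℕ => ‖((k:ℝ)+1) ^ (-c)‖) := by
      refine this.congr fun k => ?_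
      rw [Real.norm_eq_abs, abs_of_pos (Real.rpow_pos_of_pos (by positivity) _)]
    rw [← NNReal.summable_coe]
    exact h2.congr fun k => (coe_nnnorm _).symm
  rw [hswap]
  -- Step 3: evaluate each integral
  have step3 : ∀ k : ℕ, ∫ x in Set.Ioo (0:ℝ) 1, x ^ k / ((k:ℝ)+1) ^ c * L x
      = -γ * ((k:ℝ)+1) ^ (-(c+1)) - Real.log ((k:ℝ)+1) * ((k:ℝ)+1) ^ (-(c+1)) := by
    intro k
    have hb : (0:ℝ) < (k:ℝ)+1 := by positivity
    have : ∀ x : ℝ, x ^ k / ((k:ℝ)+1) ^ c * L x = (((k:ℝ)+1) ^ c)⁻¹ * (x ^ k * L x) := by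
      intro x; ring
    simp_rw [this]
    rw [MeasureTheory.integral_const_mul, termInt k]
    rw [Real.rpow_neg hb.le, Real.rpow_add hb, Real.rpow_one]
    field_simp
    ring
  simp_rw [step3]
  -- Step 4: sum up
  have hsum1 : Summable (fun k : ℕ => -γ * ((k:ℝ)+1) ^ (-(c+1))) :=
    (summable1 hc1).mul_left _
  have hsum2 : Summable (fun k : ℕ => Real.log ((k:ℝ)+1) * ((k:ℝ)+1) ^ (-(c+1))) :=
    summable2 hc1
  rw [Summable.tsum_sub hsum1 hsum2, tsum_mul_left, deriv_zetaR hc1, zetaR]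
  ring
end
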